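/- For every integer n ≥ 5, the Kneser graph K(n,2) contains no induced path on 6 vertices. -/

import Mathlib

open SimpleGraph

/-- The Kneser graph `K(n,2)`: vertices are the 2-element subsets of `{1,…,n}`,
adjacent iff disjoint. -/
def kneser (n : ℕ) : SimpleGraph {s : Finset (Fin n) // s.card = 2} where
  Adj u v := Disjoint u.1 v.1
  symm := ⟨fun u v h => h.symm⟩
  loopless := by
    constructor
    intro u h
    have h0 : u.1 = ∅ := disjoint_self.mp h
    have h2 := u.2
    rw [h0] at h2
    simp at h2

lemma two_set_meets {α : Type*} [DecidableEq α] {A B X : Finset α}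
    (hX : X.card = 2) (hAB : Disjoint A B)
    (hXA : ¬Disjoint X A) (hXB : ¬Disjoint X B) :
    ∃ a ∈ A, ∃ b ∈ B, X = {a, b} := by
  rw [Finset.not_disjoint_iff] at hXA hXB
  obtain ⟨a, haX, haA⟩ := hXA
  obtain ⟨b, hbX, hbB⟩ := hXB
  have hab : a ≠ b := fun h => (Finset.disjoint_left.mp hAB haA) (h ▸ hbB)
  refine ⟨a, haA, b, hbB, ?_⟩
  have hsub : ({a, b} : Finset α) ⊆ X := by
    intro x hx
    rcases Finset.mem_insert.mp hx with h | h
    · exact h ▸ haX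
    · exact (Finset.mem_singleton.mp h) ▸ hbX
  have hcard : ({a, b} : Finset α).card = 2 := Finset.card_pair hab
  exact (Finset.eq_of_subset_of_card_le hsub (by omega)).symm

lemma key {α : Type*} [DecidableEq α] {A B C D E : Finset α}
    (hA : A.card = 2) (hB : B.card = 2) (hC : C.card = 2) (hD : D.card = 2)
    (hE : E.card = 2) (hAB : Disjoint A B)
    (hCA : ¬Disjoint C A) (hCB : ¬Disjoint C B)
    (hDA : ¬Disjoint D A) (hDB : ¬Disjoint D B)
    (hEA : ¬Disjoint E A) (hEB : ¬Disjoint E B)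
    (hCD : Disjoint C D) (hDE : Disjoint D E) : C = E := by
  obtain ⟨a1, ha1, b1, hb1, hCeq⟩ := two_set_meets hC hAB hCA hCB
  obtain ⟨a2, ha2, b2, hb2, hDeq⟩ := two_set_meets hD hAB hDA hDB
  obtain ⟨a3, ha3, b3, hb3, hEeq⟩ := two_set_meets hE hAB hEA hEB
  have ha12 : a1 ≠ a2 := by
    intro h
    exact Finset.disjoint_left.mp hCD (hCeq ▸ Finset.mem_insert_self a1 {b1})
      (hDeq ▸ h ▸ Finset.mem_insert_self a1 {b2})
  have hb12 : b1 ≠ b2 := by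
    intro h
    exact Finset.disjoint_left.mp hCD (hCeq ▸ Finset.mem_insert_of_mem (Finset.mem_singleton_self b1))
      (hDeq ▸ h ▸ Finset.mem_insert_of_mem (Finset.mem_singleton_self b1))
  have ha32 : a3 ≠ a2 := by
    intro h
    exact Finset.disjoint_left.mp hDE
      (show a2 ∈ D by rw [hDeq]; exact Finset.mem_insert_self _ _)
      (show a2 ∈ E by rw [hEeq, ← h]; exact Finset.mem_insert_self _ _)
  have hb32 : b3 ≠ b2 := by
    intro h
    exact Finset.disjoint_left.mp hDE
      (show b2 ∈ D by rw [hDeq]; exact Finset.mem_insert_of_mem (Finset.mem_singleton_self _))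
      (show b2 ∈ E by rw [hEeq, ← h]; exact Finset.mem_insert_of_mem (Finset.mem_singleton_self _))
  -- A = {a1, a2}, so a3 = a1
  have hAeq : A = {a1, a2} := by
    have hsub : ({a1, a2} : Finset α) ⊆ A := by
      intro x hx
      rcases Finset.mem_insert.mp hx with h | h
      · exact h ▸ ha1
      · exact (Finset.mem_singleton.mp h) ▸ ha2
    exact (Finset.eq_of_subset_of_card_le hsub
      (by rw [Finset.card_pair ha12]; omega)).symm
  have hBeq : B = {b1, b2} := by
    have hsub : ({b1, b2} : Finset α) ⊆ B := by
      intro x hx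
      rcases Finset.mem_insert.mp hx with h | h
      · exact h ▸ hb1
      · exact (Finset.mem_singleton.mp h) ▸ hb2
    exact (Finset.eq_of_subset_of_card_le hsub
      (by rw [Finset.card_pair hb12]; omega)).symm
  have ha31 : a3 = a1 := by
    have := hAeq ▸ ha3
    rcases Finset.mem_insert.mp this with h | h
    · exact h
    · exact absurd (Finset.mem_singleton.mp h) ha32
  have hb31 : b3 = b1 := by
    have := hBeq ▸ hb3
    rcases Finset.mem_insert.mp this with h | h
    · exact h
    · exact absurd (Finset.mem_singleton.mp h) hb32
  rw [hCeq, hEeq, ha31, hb31]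

/-- For every integer `n ≥ 5`, the Kneser graph `K(n,2)` contains no induced path on
6 vertices. -/
theorem kneser_no_induced_P6 (n : ℕ) (hn : 5 ≤ n) :
    IsEmpty (pathGraph 6 ↪g kneser n) := by
  constructor
  intro f
  have adj : ∀ i j : Fin 6, (pathGraph 6).Adj i j → Disjoint (f i).1 (f j).1 :=
    fun i j h => f.map_adj_iff.mpr h
  have nadj : ∀ i j : Fin 6, ¬(pathGraph 6).Adj i j → i ≠ j → ¬Disjoint (f i).1 (f j).1 := by
    intro i j h hne hd
    exact h (f.map_adj_iff.mp hd)
  have h01 : Disjoint (f 0).1 (f 1).1 := adj 0 1 (by simp only [pathGraph_adj]; decide)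
  have h34 : Disjoint (f 3).1 (f 4).1 := adj 3 4 (by simp only [pathGraph_adj]; decide)
  have h45 : Disjoint (f 4).1 (f 5).1 := adj 4 5 (by simp only [pathGraph_adj]; decide)
  have h30 : ¬Disjoint (f 3).1 (f 0).1 := nadj 3 0 (by simp only [pathGraph_adj]; decide) (by decide)
  have h31 : ¬Disjoint (f 3).1 (f 1).1 := nadj 3 1 (by simp only [pathGraph_adj]; decide) (by decide)
  have h40 : ¬Disjoint (f 4).1 (f 0).1 := nadj 4 0 (by simp only [pathGraph_adj]; decide) (by decide)
  have h41 : ¬Disjoint (f 4).1 (f 1).1 := nadj 4 1 (by simp only [pathGraph_adj]; decide) (by decide)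
  have h50 : ¬Disjoint (f 5).1 (f 0).1 := nadj 5 0 (by simp only [pathGraph_adj]; decide) (by decide)
  have h51 : ¬Disjoint (f 5).1 (f 1).1 := nadj 5 1 (by simp only [pathGraph_adj]; decide) (by decide)
  have h35 : (f 3).1 = (f 5).1 :=
    key (f 0).2 (f 1).2 (f 3).2 (f 4).2 (f 5).2 h01 h30 h31 h40 h41 h50 h51 h34 h45
  have : (3 : Fin 6) = 5 := f.injective (Subtype.ext h35)
  exact absurd this (by decide)
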